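/- Consider the homogeneous pinning model (\omega_n \equiv 1) with hard-wall repulsion for the (p,q)-walk with 0 < p < 1. Then there exists \beta_0 > 0 such that F^+(\beta) = 0, and consequently f_c^+(\beta) = 0, for every \beta \in (0, \beta_0). -/

import Mathlib

open Filter Finset

noncomputable section
open scoped Classical

/-- The three possible increments of the `(p,q)`-walk: `-1, 0, +1`. -/
def step : Fin 3 → ℤ := ![-1, 0, 1]

/-- The probability weights of the three increments: `p/2, q = 1-p, p/2`. -/
def wt (p : ℝ) : Fin 3 → ℝ := ![p / 2, 1 - p, p / 2]

/-- Position of the walk after `n` steps, given the increments `ξ`. -/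
def pos {N : ℕ} (ξ : Fin N → Fin 3) (n : ℕ) : ℤ :=
  ∑ i : Fin N, if (i : ℕ) < n then step (ξ i) else 0

/-- Probability weight of the path with increments `ξ`. -/
def pwt (p : ℝ) {N : ℕ} (ξ : Fin N → Fin 3) : ℝ := ∏ i : Fin N, wt p (ξ i)

/-- The pinning partition function `Z_{N,ω}^{β,f}` of the `(p,q)`-walk with
charges `ω`, inverse temperature `β` and force `f`. -/
def Z (p : ℝ) (ω : ℕ → ℝ) (β f : ℝ) (N : ℕ) : ℝ :=
  ∑ ξ : Fin N → Fin 3,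
    pwt p ξ *
      Real.exp (β * ∑ n ∈ Finset.Icc 1 N, (if pos ξ n = 0 then ω n else 0)
        + β * f * ((pos ξ N : ℤ) : ℝ))

/-- `g(y) = log (p cosh y + q)`. -/
def g (p y : ℝ) : ℝ := Real.log (p * Real.cosh y + (1 - p))

/-- The hard-wall pinning partition function: expectation restricted to paths
with `S_n ≥ 0` for `n = 1, …, N`. -/
def Zplus (p : ℝ) (ω : ℕ → ℝ) (β f : ℝ) (N : ℕ) : ℝ :=
  ∑ ξ : Fin N → Fin 3,
    if ∀ n ∈ Finset.Icc 1 N, 0 ≤ pos ξ n then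
      pwt p ξ *
        Real.exp (β * ∑ n ∈ Finset.Icc 1 N, (if pos ξ n = 0 then ω n else 0)
          + β * f * ((pos ξ N : ℤ) : ℝ))
    else 0

/- ### basic lemmas -/

/-- step at time j (0-indexed) -/
def stepAt {N : ℕ} (ξ : Fin N → Fin 3) (j : ℕ) : ℤ :=
  if h : j < N then step (ξ ⟨j, h⟩) else 0

lemma pos_zero {N : ℕ} (ξ : Fin N → Fin 3) : pos ξ 0 = 0 := by
  simp [pos]

lemma pos_eq_sum_range {N : ℕ} (ξ : Fin N → Fin 3) (n : ℕ) :
    pos ξ n = ∑ j ∈ range n, stepAt ξ j := by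
  induction n with
  | zero => simp [pos]
  | succ n ih =>
    rw [Finset.sum_range_succ, ← ih]
    unfold pos
    have h1 : ∀ i : Fin N, (if (i:ℕ) < n + 1 then step (ξ i) else 0)
        = (if (i:ℕ) < n then step (ξ i) else 0) + (if (i:ℕ) = n then step (ξ i) else 0) := by
      intro i
      by_cases h : (i:ℕ) < n
      · rw [if_pos (by omega), if_pos h, if_neg (by omega), add_zero]
      · by_cases h2 : (i:ℕ) = n
        · rw [if_pos (by omega), if_neg h, if_pos h2, zero_add]
        · rw [if_neg (by omega), if_neg h, if_neg h2, add_zero]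
    simp only [h1, Finset.sum_add_distrib]
    congr 1
    unfold stepAt
    by_cases h : n < N
    · rw [dif_pos h, Finset.sum_eq_single (⟨n, h⟩ : Fin N)]
      · simp
      · intro b _ hb
        rw [if_neg (fun hc => hb (Fin.ext hc))]
      · simp
    · rw [dif_neg h]
      apply Finset.sum_eq_zero
      intro i _
      rw [if_neg (by omega)]

lemma wt_nonneg {p : ℝ} (hp : 0 < p) (hp1 : p < 1) (i : Fin 3) : 0 ≤ wt p i := by
  fin_cases i <;> simp [wt] <;> linarith

lemma pwt_nonneg {p : ℝ} (hp : 0 < p) (hp1 : p < 1) {N : ℕ} (ξ : Fin N → Fin 3) :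
    0 ≤ pwt p ξ :=
  Finset.prod_nonneg fun i _ => wt_nonneg hp hp1 _

lemma sum_wt (p : ℝ) : ∑ i : Fin 3, wt p i = 1 := by
  simp [Fin.sum_univ_three, wt]; ring

lemma sum_pwt (p : ℝ) (N : ℕ) : ∑ ξ : Fin N → Fin 3, pwt p ξ = 1 := by
  unfold pwt
  rw [← Fintype.piFinset_univ, ← Finset.prod_univ_sum]
  simp [sum_wt]

/- Icc ↔ range conversions -/
lemma sum_Icc_one (N : ℕ) (f : ℕ → ℝ) :
    ∑ n ∈ Finset.Icc 1 N, f n = ∑ k ∈ range N, f (k+1) := by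
  induction N with
  | zero => simp
  | succ N ih => rw [Finset.sum_Icc_succ_top (by omega), ih, Finset.sum_range_succ]

lemma forall_Icc_one (N : ℕ) (P : ℕ → Prop) :
    (∀ n ∈ Finset.Icc 1 N, P n) ↔ ∀ k ∈ range N, P (k+1) := by
  constructor
  · intro h k hk
    exact h (k+1) (by simp at hk ⊢; omega)
  · intro h n hn
    simp at hn
    have := h (n-1) (by simp; omega)
    rwa [Nat.sub_add_cancel hn.1] at this

end

noncomputable section
open scoped Classical

lemma forall_range_succ' (N : ℕ) (P : ℕ → Prop) :
    (∀ k ∈ range (N+1), P k) ↔ P 0 ∧ ∀ k ∈ range N, P (k+1) := by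
  constructor
  · intro h
    exact ⟨h 0 (by simp), fun k hk => h (k+1) (by simp at hk ⊢; omega)⟩
  · rintro ⟨h0, h⟩ k hk
    cases k with
    | zero => exact h0
    | succ k => exact h k (by simp at hk ⊢; omega)

def Wsum (p β : ℝ) (x : ℤ) (N : ℕ) : ℝ :=
  ∑ ξ : Fin N → Fin 3,
    if ∀ k ∈ range N, 0 ≤ x + pos ξ (k+1) then
      pwt p ξ * Real.exp (β * ∑ k ∈ range N, (if x + pos ξ (k+1) = 0 then (1:ℝ) else 0))
    else 0

lemma Zplus_eq_Wsum (p β : ℝ) (N : ℕ) :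
    Zplus p (fun _ => 1) β 0 N = Wsum p β 0 N := by
  unfold Zplus Wsum
  apply Finset.sum_congr rfl
  intro ξ _
  rw [forall_Icc_one N (fun n => 0 ≤ pos ξ n), sum_Icc_one N (fun n => if pos ξ n = 0 then (1:ℝ) else 0)]
  simp only [zero_add, mul_zero, zero_mul, add_zero]

lemma pos_cons {N : ℕ} (s : Fin 3) (η : Fin N → Fin 3) (n : ℕ) :
    pos (Fin.cons s η) (n+1) = step s + pos η n := by
  rw [pos_eq_sum_range, pos_eq_sum_range, Finset.sum_range_succ']
  have h0 : stepAt (Fin.cons s η) 0 = step s := by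
    unfold stepAt
    rw [dif_pos (Nat.succ_pos N)]
    congr 1
  have hs : ∀ j, stepAt (Fin.cons s η) (j+1) = stepAt η j := by
    intro j
    unfold stepAt
    by_cases hj : j < N
    · rw [dif_pos (by omega : j + 1 < N + 1), dif_pos hj]
      have : (⟨j+1, by omega⟩ : Fin (N+1)) = Fin.succ ⟨j, hj⟩ := rfl
      rw [this, Fin.cons_succ]
    · rw [dif_neg (by omega), dif_neg hj]
  rw [h0, add_comm]
  congr 1
  exact Finset.sum_congr rfl fun j _ => hs j

lemma Wsum_succ (p β : ℝ) (x : ℤ) (N : ℕ) :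
    Wsum p β x (N+1) = ∑ s : Fin 3,
      (if 0 ≤ x + step s then
        (wt p s * Real.exp (β * (if x + step s = 0 then (1:ℝ) else 0))) * Wsum p β (x + step s) N
      else 0) := by
  unfold Wsum
  rw [← Equiv.sum_comp (Fin.consEquiv (fun _ => Fin 3)), Fintype.sum_prod_type]
  simp only [Fin.consEquiv, Equiv.coe_fn_mk]
  apply Finset.sum_congr rfl
  intro s _
  have key : ∀ η : Fin N → Fin 3,
      (if ∀ k ∈ range (N+1), 0 ≤ x + pos (Fin.cons s η) (k+1) then
        pwt p (Fin.cons s η) * Real.exp (β * ∑ k ∈ range (N+1), (if x + pos (Fin.cons s η) (k+1) = 0 then (1:ℝ) else 0))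
      else 0)
      = (if 0 ≤ x + step s then
          (wt p s * Real.exp (β * (if x + step s = 0 then (1:ℝ) else 0)))
        else 0) *
        (if ∀ k ∈ range N, 0 ≤ (x + step s) + pos η (k+1) then
          pwt p η * Real.exp (β * ∑ k ∈ range N, (if (x + step s) + pos η (k+1) = 0 then (1:ℝ) else 0))
        else 0) := by
    intro η
    have hcond : (∀ k ∈ range (N+1), 0 ≤ x + pos (Fin.cons s η) (k+1))
        ↔ (0 ≤ x + step s ∧ ∀ k ∈ range N, 0 ≤ (x + step s) + pos η (k+1)) := by
      rw [forall_range_succ' N (fun k => 0 ≤ x + pos (Fin.cons s η) (k+1))]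
      constructor
      · rintro ⟨h0, h⟩
        refine ⟨by simpa [pos_cons, pos_zero] using h0, fun k hk => ?_⟩
        have := h k hk
        rw [pos_cons] at this
        linarith
      · rintro ⟨h0, h⟩
        refine ⟨by simpa [pos_cons, pos_zero] using h0, fun k hk => ?_⟩
        rw [pos_cons]
        have := h k hk
        linarith
    have hsum : ∑ k ∈ range (N+1), (if x + pos (Fin.cons s η) (k+1) = 0 then (1:ℝ) else 0)
        = (∑ k ∈ range N, (if (x + step s) + pos η (k+1) = 0 then (1:ℝ) else 0))
          + (if x + step s = 0 then (1:ℝ) else 0) := by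
      rw [Finset.sum_range_succ']
      congr 1
      · apply Finset.sum_congr rfl
        intro k _
        rw [pos_cons, add_assoc]
      · rw [pos_cons, pos_zero, add_zero]
    have hpwt : pwt p (Fin.cons s η) = wt p s * pwt p η := by
      unfold pwt
      rw [Fin.prod_univ_succ]
      simp
    simp only [hcond, hsum, hpwt]
    by_cases h0 : 0 ≤ x + step s
    · by_cases hB : ∀ k ∈ range N, 0 ≤ (x + step s) + pos η (k+1)
      · rw [if_pos ⟨h0, hB⟩, if_pos h0, if_pos hB, mul_add, Real.exp_add]
        ring
      · rw [if_neg (by tauto), if_pos h0, if_neg hB, mul_zero]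
    · rw [if_neg (by tauto), if_neg h0, zero_mul]
  refine (Finset.sum_congr rfl (fun η _ => key η)).trans ?_
  rw [← Finset.mul_sum, ite_mul, zero_mul]
end

noncomputable section
open scoped Classical

lemma step_zero' : step 0 = -1 := rfl
lemma step_one' : step 1 = 0 := rfl
lemma step_two' : step 2 = 1 := rfl
lemma wt_zero' (p : ℝ) : wt p 0 = p / 2 := rfl
lemma wt_one' (p : ℝ) : wt p 1 = 1 - p := rfl
lemma wt_two' (p : ℝ) : wt p 2 = p / 2 := rfl

lemma Wsum_zero (p β : ℝ) (x : ℤ) : Wsum p β x 0 = 1 := by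
  have huniv : (Finset.univ : Finset (Fin 0 → Fin 3)) = {fun i => i.elim0} :=
    Finset.eq_singleton_iff_unique_mem.mpr
      ⟨Finset.mem_univ _, fun x _ => funext fun i => i.elim0⟩
  unfold Wsum
  rw [huniv, Finset.sum_singleton]
  simp [pwt]

lemma Wsum_nonneg {p : ℝ} (hp : 0 < p) (hp1 : p < 1) (β : ℝ) (x : ℤ) (N : ℕ) :
    0 ≤ Wsum p β x N := by
  apply Finset.sum_nonneg
  intro ξ _
  split_ifs
  · exact mul_nonneg (pwt_nonneg hp hp1 ξ) (Real.exp_nonneg _)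
  · exact le_rfl

lemma Wsum_le {p : ℝ} (hp : 0 < p) (hp1 : p < 1) {β : ℝ} (hβ : 0 ≤ β)
    (hsub : Real.exp β * (1 - p/2) ≤ 1) :
    ∀ (N : ℕ) (x : ℤ), 0 ≤ x → Wsum p β x N ≤ (if x = 0 then 1 else Real.exp β) := by
  intro N
  induction N with
  | zero =>
    intro x hx
    rw [Wsum_zero]
    split_ifs
    · exact le_rfl
    · exact Real.one_le_exp hβ
  | succ N ih =>
    intro x hx
    rw [Wsum_succ, Fin.sum_univ_three, step_zero', step_one', step_two',
      wt_zero', wt_one', wt_two']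
    have hexp : (0:ℝ) < Real.exp β := Real.exp_pos β
    have h1exp : (1:ℝ) ≤ Real.exp β := Real.one_le_exp hβ
    rcases eq_or_lt_of_le hx with hx0 | hx1
    · -- x = 0
      rw [← hx0]
      have t1 : ¬ ((0:ℤ) ≤ 0 + -1) := by omega
      rw [if_neg t1]
      rw [if_pos (by omega : (0:ℤ) ≤ 0 + 0), if_pos (by omega : (0:ℤ) ≤ 0 + 1)]
      rw [if_pos (by omega : (0:ℤ) + 0 = 0), if_neg (by omega : ¬ ((0:ℤ) + 1 = 0))]
      have w2 : Wsum p β (0 + 0) N ≤ 1 := by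
        have := ih (0 + 0) (by omega)
        simpa using this
      have w3 : Wsum p β (0 + 1) N ≤ Real.exp β := by
        have := ih (0 + 1) (by omega)
        simpa using this
      have hW2 := Wsum_nonneg hp hp1 β (0+0) N
      have hW3 := Wsum_nonneg hp hp1 β (0+1) N
      rw [if_pos rfl]
      have hb : (1 - p) * Real.exp (β * 1) * Wsum p β (0+0) N
          + (p/2) * Real.exp (β * 0) * Wsum p β (0+1) N
          ≤ Real.exp β * (1 - p/2) := by
        rw [mul_one, mul_zero, Real.exp_zero]
        have b2 : (1 - p) * Real.exp β * Wsum p β (0+0) N ≤ (1 - p) * Real.exp β * 1 :=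
          mul_le_mul_of_nonneg_left w2 (by nlinarith)
        have b3 : (p/2) * 1 * Wsum p β (0+1) N ≤ (p/2) * 1 * Real.exp β :=
          mul_le_mul_of_nonneg_left w3 (by nlinarith)
        calc (1 - p) * Real.exp β * Wsum p β (0+0) N + p/2 * 1 * Wsum p β (0+1) N
            ≤ (1 - p) * Real.exp β * 1 + p/2 * 1 * Real.exp β := add_le_add b2 b3
          _ = Real.exp β * (1 - p/2) := by ring
      calc (0:ℝ) + (1 - p) * Real.exp (β * 1) * Wsum p β (0+0) N
            + (p/2) * Real.exp (β * 0) * Wsum p β (0+1) N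
          ≤ Real.exp β * (1 - p/2) := by rw [zero_add]; exact hb
        _ ≤ 1 := hsub
    · -- x ≥ 1
      have hx1' : (1:ℤ) ≤ x := hx1
      rw [if_pos (by omega : (0:ℤ) ≤ x + -1), if_pos (by omega : (0:ℤ) ≤ x + 0),
        if_pos (by omega : (0:ℤ) ≤ x + 1)]
      rw [if_neg (by omega : ¬ (x + 0 = 0)), if_neg (by omega : ¬ (x + 1 = 0))]
      rw [if_neg (by omega : ¬ (x = 0))]
      have w1 : Wsum p β (x + -1) N ≤ Real.exp β := by
        have := ih (x + -1) (by omega)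
        split_ifs at this with h
        · linarith
        · exact this
      have w2 : Wsum p β (x + 0) N ≤ Real.exp β := by
        have := ih (x + 0) (by omega)
        rw [if_neg (by omega)] at this
        exact this
      have w3 : Wsum p β (x + 1) N ≤ Real.exp β := by
        have := ih (x + 1) (by omega)
        rw [if_neg (by omega)] at this
        exact this
      have hW1 := Wsum_nonneg hp hp1 β (x + -1) N
      have hEW : Real.exp (β * (if x + -1 = 0 then (1:ℝ) else 0)) * Wsum p β (x + -1) N
          ≤ Real.exp β := by
        by_cases h : x + -1 = 0
        · rw [if_pos h, mul_one]
          have := ih (x + -1) (by omega)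
          rw [if_pos h] at this
          nlinarith
        · rw [if_neg h, mul_zero, Real.exp_zero, one_mul]
          have := ih (x + -1) (by omega)
          rwa [if_neg h] at this
      simp only [mul_zero, Real.exp_zero]
      have b1 : p/2 * (Real.exp (β * (if x + -1 = 0 then (1:ℝ) else 0)) * Wsum p β (x + -1) N)
          ≤ p/2 * Real.exp β := mul_le_mul_of_nonneg_left hEW (by linarith)
      have b2 : (1 - p) * Wsum p β (x + 0) N ≤ (1 - p) * Real.exp β :=
        mul_le_mul_of_nonneg_left w2 (by linarith)
      have b3 : p/2 * Wsum p β (x + 1) N ≤ p/2 * Real.exp β :=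
        mul_le_mul_of_nonneg_left w3 (by linarith)
      calc p/2 * Real.exp (β * (if x + -1 = 0 then (1:ℝ) else 0)) * Wsum p β (x + -1) N
            + (1 - p) * 1 * Wsum p β (x + 0) N + p/2 * 1 * Wsum p β (x + 1) N
          = p/2 * (Real.exp (β * (if x + -1 = 0 then (1:ℝ) else 0)) * Wsum p β (x + -1) N)
            + (1 - p) * Wsum p β (x + 0) N + p/2 * Wsum p β (x + 1) N := by ring
        _ ≤ p/2 * Real.exp β + (1 - p) * Real.exp β + p/2 * Real.exp β :=
            add_le_add (add_le_add b1 b2) b3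
        _ = Real.exp β := by ring
end

noncomputable section
open scoped Classical

def flip3 : Fin 3 → Fin 3 := ![2, 1, 0]

lemma flip3_flip3 (i : Fin 3) : flip3 (flip3 i) = i := by fin_cases i <;> rfl

lemma wt_flip3 (p : ℝ) (i : Fin 3) : wt p (flip3 i) = wt p i := by fin_cases i <;> rfl

lemma step_flip3 (i : Fin 3) : step (flip3 i) = - step i := by fin_cases i <;> rfl

lemma pwt_flip3 (p : ℝ) {N : ℕ} (ξ : Fin N → Fin 3) :
    pwt p (flip3 ∘ ξ) = pwt p ξ :=
  Finset.prod_congr rfl fun i _ => wt_flip3 p (ξ i)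

lemma pos_flip3 {N : ℕ} (ξ : Fin N → Fin 3) (n : ℕ) :
    pos (flip3 ∘ ξ) n = - pos ξ n := by
  unfold pos
  rw [← Finset.sum_neg_distrib]
  apply Finset.sum_congr rfl
  intro i _
  split_ifs
  · exact step_flip3 (ξ i)
  · simp

lemma flip3_comp_bijective (N : ℕ) :
    Function.Bijective (fun ξ : Fin N → Fin 3 => flip3 ∘ ξ) := by
  apply Function.bijective_iff_has_inverse.mpr
  exact ⟨fun ξ => flip3 ∘ ξ,
    fun ξ => funext fun i => flip3_flip3 (ξ i),
    fun ξ => funext fun i => flip3_flip3 (ξ i)⟩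

/-- `P(S_N ≥ 0) ≥ 1/2`. -/
lemma Qsum_ge_half {p : ℝ} (hp : 0 < p) (hp1 : p < 1) (N : ℕ) :
    (1:ℝ)/2 ≤ ∑ ξ : Fin N → Fin 3, if 0 ≤ pos ξ N then pwt p ξ else 0 := by
  set Q := ∑ ξ : Fin N → Fin 3, if 0 ≤ pos ξ N then pwt p ξ else 0 with hQ
  have hQ' : (∑ ξ : Fin N → Fin 3, if pos ξ N ≤ 0 then pwt p ξ else 0) = Q := by
    rw [hQ, ← Function.Bijective.sum_comp (flip3_comp_bijective N)
      (fun ξ => if 0 ≤ pos ξ N then pwt p ξ else 0)]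
    apply Finset.sum_congr rfl
    intro ξ _
    rw [pos_flip3, pwt_flip3]
    congr 1
    simp [neg_nonneg]
  have key : (1:ℝ) ≤ Q + Q := by
    calc (1:ℝ) = ∑ ξ : Fin N → Fin 3, pwt p ξ := (sum_pwt p N).symm
      _ ≤ ∑ ξ : Fin N → Fin 3, ((if 0 ≤ pos ξ N then pwt p ξ else 0)
          + (if pos ξ N ≤ 0 then pwt p ξ else 0)) := by
          apply Finset.sum_le_sum
          intro ξ _
          rcases le_or_gt 0 (pos ξ N) with h | h
          · rw [if_pos h]
            have : (0:ℝ) ≤ if pos ξ N ≤ 0 then pwt p ξ else 0 := by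
              split_ifs
              · exact pwt_nonneg hp hp1 ξ
              · exact le_rfl
            linarith
          · rw [if_neg (by omega), if_pos (le_of_lt h), zero_add]
      _ = Q + Q := by rw [Finset.sum_add_distrib, hQ', ← hQ]
  linarith
end

noncomputable section
open scoped Classical

section Rot
variable {N : ℕ} [NeZero N]

def rot (c : Fin N) (ξ : Fin N → Fin 3) : Fin N → Fin 3 := fun i => ξ (i + c)

lemma pwt_rot (p : ℝ) (c : Fin N) (ξ : Fin N → Fin 3) :
    pwt p (rot c ξ) = pwt p ξ :=
  Fintype.prod_equiv (Equiv.addRight c) _ _ (fun i => rfl)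

lemma rot_bijective (c : Fin N) : Function.Bijective (rot (N := N) c) := by
  apply Function.bijective_iff_has_inverse.mpr
  refine ⟨rot (-c), fun ξ => funext fun i => ?_, fun ξ => funext fun i => ?_⟩
  · show ξ (i + -c + c) = ξ i
    rw [neg_add_cancel_right]
  · show ξ (i + c + -c) = ξ i
    rw [add_neg_cancel_right]

lemma stepAt_rot (c : Fin N) (ξ : Fin N → Fin 3) {j : ℕ} (hj : j < N) :
    stepAt (rot c ξ) j = stepAt ξ ((j + (c : ℕ)) % N) := by
  unfold stepAt
  rw [dif_pos hj, dif_pos (Nat.mod_lt _ (Nat.pos_of_ne_zero (NeZero.ne N)))]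
  show step (ξ (⟨j, hj⟩ + c)) = _
  congr 1

lemma pos_rot_low {m : ℕ} (hm : m < N) (ξ : Fin N → Fin 3) {n : ℕ} (hn : n ≤ N - m) :
    pos (rot (⟨m, hm⟩ : Fin N) ξ) n = pos ξ (m + n) - pos ξ m := by
  rw [pos_eq_sum_range, pos_eq_sum_range, pos_eq_sum_range, Finset.sum_range_add]
  rw [add_sub_cancel_left]
  apply Finset.sum_congr rfl
  intro j hj
  rw [Finset.mem_range] at hj
  rw [stepAt_rot _ _ (by omega : j < N)]
  congr 1
  show (j + m) % N = m + j
  rw [Nat.mod_eq_of_lt (by omega), Nat.add_comm]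

lemma pos_rot_high {m : ℕ} (hm : m < N) (ξ : Fin N → Fin 3) {n : ℕ}
    (hn1 : N - m ≤ n) (hn2 : n ≤ N) :
    pos (rot (⟨m, hm⟩ : Fin N) ξ) n
      = (pos ξ N - pos ξ m) + pos ξ (n - (N - m)) := by
  have hrep : n = (N - m) + (n - (N - m)) := by omega
  set r := n - (N - m) with hr
  have hrm : r ≤ m := by omega
  rw [pos_eq_sum_range]
  rw [hrep, Finset.sum_range_add]
  congr 1
  · rw [← pos_eq_sum_range, pos_rot_low hm ξ (le_refl (N - m)),
      Nat.add_sub_cancel' (le_of_lt hm)]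
  · rw [pos_eq_sum_range]
    apply Finset.sum_congr rfl
    intro j hj
    rw [Finset.mem_range] at hj
    rw [stepAt_rot _ _ (by omega : N - m + j < N)]
    congr 1
    show (N - m + j + m) % N = j
    have : N - m + j + m = N + j := by omega
    rw [this, Nat.add_mod_left, Nat.mod_eq_of_lt (by omega)]

/-- there is a rotation making the path nonnegative, provided `S_N ≥ 0`. -/
lemma exists_rot_nonneg (ξ : Fin N → Fin 3) (hSN : 0 ≤ pos ξ N) :
    ∃ c : Fin N, ∀ k ∈ range N, 0 ≤ pos (rot c ξ) (k + 1) := by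
  have hNpos : 0 < N := Nat.pos_of_ne_zero (NeZero.ne N)
  obtain ⟨m0, hm0mem, hm0min⟩ := Finset.exists_min_image (range (N+1))
    (fun n => pos ξ n) ⟨0, by simp⟩
  rw [Finset.mem_range] at hm0mem
  have key : ∃ m, m < N ∧ ∀ j ≤ N, pos ξ m ≤ pos ξ j := by
    by_cases h : m0 < N
    · exact ⟨m0, h, fun j hj => hm0min j (by rw [Finset.mem_range]; omega)⟩
    · have hm0N : m0 = N := by omega
      refine ⟨0, hNpos, fun j hj => ?_⟩
      rw [pos_zero]
      have h1 := hm0min 0 (by simp)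
      rw [hm0N, pos_zero] at h1
      have h2 := hm0min j (by rw [Finset.mem_range]; omega)
      rw [hm0N] at h2
      omega
  obtain ⟨m, hm, hmin⟩ := key
  refine ⟨⟨m, hm⟩, fun k hk => ?_⟩
  rw [Finset.mem_range] at hk
  set n := k + 1 with hn
  have hn1 : 1 ≤ n := by omega
  have hn2 : n ≤ N := by omega
  by_cases hcase : n ≤ N - m
  · rw [pos_rot_low hm ξ hcase]
    have := hmin (m + n) (by omega)
    omega
  · rw [pos_rot_high hm ξ (by omega) hn2]
    have h1 := hmin (n - (N - m)) (by omega)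
    have h2 := hmin N (le_refl N)
    omega

end Rot

/-- the cycle-lemma counting bound: `Q ≤ N * P`. -/
lemma Qsum_le_N_mul_Psum {p : ℝ} (hp : 0 < p) (hp1 : p < 1) (N : ℕ) (hN : 0 < N) :
    (∑ ξ : Fin N → Fin 3, if 0 ≤ pos ξ N then pwt p ξ else 0)
      ≤ (N : ℝ) * ∑ ξ : Fin N → Fin 3,
          if ∀ k ∈ range N, 0 ≤ pos ξ (k+1) then pwt p ξ else 0 := by
  haveI : NeZero N := ⟨hN.ne'⟩
  have step1 : (∑ ξ : Fin N → Fin 3, if 0 ≤ pos ξ N then pwt p ξ else 0)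
      ≤ ∑ ξ : Fin N → Fin 3, ∑ c : Fin N,
          (if ∀ k ∈ range N, 0 ≤ pos (rot c ξ) (k+1) then pwt p ξ else 0) := by
    apply Finset.sum_le_sum
    intro ξ _
    have hnn : ∀ c : Fin N,
        0 ≤ (if ∀ k ∈ range N, 0 ≤ pos (rot c ξ) (k+1) then pwt p ξ else 0) := by
      intro c
      split_ifs
      exacts [pwt_nonneg hp hp1 ξ, le_rfl]
    by_cases h : 0 ≤ pos ξ N
    · rw [if_pos h]
      obtain ⟨c₀, hc₀⟩ := exists_rot_nonneg ξ h
      have hle := Finset.single_le_sum (f := fun c : Fin N =>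
        (if ∀ k ∈ range N, 0 ≤ pos (rot c ξ) (k+1) then pwt p ξ else 0))
        (fun c _ => hnn c) (Finset.mem_univ c₀)
      rwa [if_pos hc₀] at hle
    · rw [if_neg h]
      exact Finset.sum_nonneg fun c _ => hnn c
  have step2 : (∑ ξ : Fin N → Fin 3, ∑ c : Fin N,
        (if ∀ k ∈ range N, 0 ≤ pos (rot c ξ) (k+1) then pwt p ξ else 0))
      = (N : ℝ) * ∑ ξ : Fin N → Fin 3,
          if ∀ k ∈ range N, 0 ≤ pos ξ (k+1) then pwt p ξ else 0 := by
    rw [Finset.sum_comm]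
    have inner : ∀ c : Fin N, (∑ ξ : Fin N → Fin 3,
        (if ∀ k ∈ range N, 0 ≤ pos (rot c ξ) (k+1) then pwt p ξ else 0))
        = ∑ ξ : Fin N → Fin 3, if ∀ k ∈ range N, 0 ≤ pos ξ (k+1) then pwt p ξ else 0 := by
      intro c
      rw [← Function.Bijective.sum_comp (rot_bijective c)
        (fun ζ => if ∀ k ∈ range N, 0 ≤ pos ζ (k+1) then pwt p ζ else 0)]
      apply Finset.sum_congr rfl
      intro ξ _
      rw [pwt_rot]
    rw [Finset.sum_congr rfl (fun c _ => inner c), Finset.sum_const, Finset.card_univ,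
      Fintype.card_fin, nsmul_eq_mul]
  calc _ ≤ _ := step1
    _ = _ := step2
end

noncomputable section
open scoped Classical
open Filter

lemma Psum_le_Wsum {p : ℝ} (hp : 0 < p) (hp1 : p < 1) {β : ℝ} (hβ : 0 ≤ β) (N : ℕ) :
    (∑ ξ : Fin N → Fin 3, if ∀ k ∈ range N, 0 ≤ pos ξ (k+1) then pwt p ξ else 0)
      ≤ Wsum p β 0 N := by
  unfold Wsum
  apply Finset.sum_le_sum
  intro ξ _
  by_cases h : ∀ k ∈ range N, 0 ≤ pos ξ (k+1)
  · rw [if_pos h, if_pos (by simpa using h)]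
    apply le_mul_of_one_le_right (pwt_nonneg hp hp1 ξ)
    apply Real.one_le_exp
    apply mul_nonneg hβ
    apply Finset.sum_nonneg
    intro k _
    split_ifs
    exacts [zero_le_one, le_rfl]
  · rw [if_neg h, if_neg (by simpa using h)]

lemma Zplus_lower {p : ℝ} (hp : 0 < p) (hp1 : p < 1) {β : ℝ} (hβ : 0 ≤ β)
    (N : ℕ) (hN : 0 < N) :
    1 / (2 * (N:ℝ)) ≤ Zplus p (fun _ => 1) β 0 N := by
  have hNR : (0:ℝ) < N := by exact_mod_cast hN
  have hQ := Qsum_ge_half hp hp1 N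
  have hQP := Qsum_le_N_mul_Psum hp hp1 N hN
  have hPW := Psum_le_Wsum hp hp1 hβ N
  rw [Zplus_eq_Wsum]
  rw [div_le_iff₀ (by positivity)]
  nlinarith [hPW, hQ, hQP]

lemma Zplus_upper {p : ℝ} (hp : 0 < p) (hp1 : p < 1) {β : ℝ} (hβ : 0 ≤ β)
    (hsub : Real.exp β * (1 - p/2) ≤ 1) (N : ℕ) :
    Zplus p (fun _ => 1) β 0 N ≤ 1 := by
  rw [Zplus_eq_Wsum]
  have := Wsum_le hp hp1 hβ hsub N 0 le_rfl
  rwa [if_pos rfl] at this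

lemma log_Zplus_tendsto_zero {p : ℝ} (hp : 0 < p) (hp1 : p < 1) {β : ℝ} (hβ : 0 ≤ β)
    (hsub : Real.exp β * (1 - p/2) ≤ 1) :
    Tendsto (fun N : ℕ => Real.log (Zplus p (fun _ => 1) β 0 N) / N) atTop (nhds 0) := by
  have h1 : Tendsto (fun x : ℝ => Real.log x / x) atTop (nhds 0) :=
    Real.isLittleO_log_id_atTop.tendsto_div_nhds_zero
  have h2 : Tendsto (fun N : ℕ => Real.log N / N) atTop (nhds 0) :=
    h1.comp tendsto_natCast_atTop_atTop
  have h3 : Tendsto (fun N : ℕ => Real.log 2 / N) atTop (nhds 0) :=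
    tendsto_const_div_atTop_nhds_zero_nat _
  have h4 : Tendsto (fun N : ℕ => -(Real.log 2 / N + Real.log N / N)) atTop (nhds 0) := by
    simpa using (h3.add h2).neg
  apply tendsto_of_tendsto_of_tendsto_of_le_of_le' h4 tendsto_const_nhds
  · -- lower bound eventually
    filter_upwards [eventually_ge_atTop 1] with N hN
    have hNR : (0:ℝ) < N := by exact_mod_cast hN
    have hZl := Zplus_lower hp hp1 hβ N (by omega)
    have hlog : Real.log (1 / (2 * (N:ℝ))) ≤ Real.log (Zplus p (fun _ => 1) β 0 N) :=
      Real.log_le_log (by positivity) hZl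
    have heq : Real.log (1 / (2 * (N:ℝ))) = -(Real.log 2 + Real.log N) := by
      rw [one_div, Real.log_inv, Real.log_mul (by norm_num) (by positivity)]
    calc -(Real.log 2 / N + Real.log N / N) = Real.log (1 / (2 * (N:ℝ))) / N := by
          rw [heq]; ring
      _ ≤ Real.log (Zplus p (fun _ => 1) β 0 N) / N := by
          apply div_le_div_of_nonneg_right hlog hNR.le
  · -- upper bound eventually
    filter_upwards with N
    apply div_nonpos_of_nonpos_of_nonneg
    · apply Real.log_nonpos
      · apply Finset.sum_nonneg
        intro ξ _
        split_ifs
        · exact mul_nonneg (pwt_nonneg hp hp1 ξ) (Real.exp_nonneg _)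
        · exact le_rfl
      · exact Zplus_upper hp hp1 hβ hsub N
    · positivity
end

noncomputable section
open scoped Classical
open Filter


/-- there is `β₀ > 0` with `F⁺(β) = 0`, hence `f_c⁺(β) = 0`, for all `0 < β < β₀`. -/
theorem stmt_8 (p : ℝ) (hp : 0 < p) (hp1 : p < 1)
    (Fp : ℝ → ℝ)
    (hFp : ∀ β : ℝ, 0 ≤ β →
      Tendsto (fun N : ℕ => Real.log (Zplus p (fun _ => 1) β 0 N) / N) atTop (nhds (Fp β)))
    (ginv : ℝ → ℝ)
    (hginv_left : ∀ y : ℝ, 0 ≤ y → ginv (g p y) = y)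
    (hginv_right : ∀ x : ℝ, 0 ≤ x → g p (ginv x) = x)
    (hginv_nonneg : ∀ x : ℝ, 0 ≤ x → 0 ≤ ginv x) :
    ∃ β₀ : ℝ, 0 < β₀ ∧ ∀ β : ℝ, 0 < β → β < β₀ → Fp β = 0 ∧ ginv (Fp β) / β = 0 := by
  have hhalf : (0:ℝ) < 1 - p/2 := by linarith
  refine ⟨-Real.log (1 - p/2), ?_, ?_⟩
  · have := Real.log_neg hhalf (by linarith)
    linarith
  · intro β hβ hβ₀
    have hsub : Real.exp β * (1 - p/2) ≤ 1 := by
      have h1 : Real.exp β ≤ (1 - p/2)⁻¹ := by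
        rw [← Real.exp_log (show (0:ℝ) < (1 - p/2)⁻¹ by positivity)]
        apply Real.exp_le_exp.mpr
        rw [Real.log_inv]
        linarith
      calc Real.exp β * (1 - p/2) ≤ (1 - p/2)⁻¹ * (1 - p/2) :=
            mul_le_mul_of_nonneg_right h1 hhalf.le
        _ = 1 := inv_mul_cancel₀ hhalf.ne'
    have hFp0 : Fp β = 0 :=
      tendsto_nhds_unique (hFp β hβ.le) (log_Zplus_tendsto_zero hp hp1 hβ.le hsub)
    have hg0 : g p 0 = 0 := by
      unfold g
      rw [Real.cosh_zero, mul_one]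
      norm_num
    have hginv0 : ginv 0 = 0 := by
      have := hginv_left 0 le_rfl
      rwa [hg0] at this
    exact ⟨hFp0, by rw [hFp0, hginv0, zero_div]⟩
end
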